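/- Let {A_k}_{k≥1} be a sequence of d×d real matrices with all entries strictly positive, fix m ≥ 1, and set P_m^n = A_m A_{m+1} ⋯ A_n for n ≥ m. Then τ(P_m^n) → 0 as n → ∞ if and only if for every ε > 0 and every pair of nonnegative nonzero vectors x, y ∈ ℝ^d there exists N such that D(P_m^n x, P_m^n y) < ε for all n ≥ N. -/

import Mathlib

open Filter

/-- The Hilbert projective metric on strictly positive vectors in `ℝ^d`. -/
noncomputable def hilbertDist {d : ℕ} (x y : Fin d → ℝ) : ℝ :=
  Real.log (⨆ i : Fin d, ⨆ j : Fin d, (x i * y j) / (x j * y i))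

/-- The Birkhoff contraction coefficient. -/
noncomputable def birkhoffCoeff {d : ℕ} (A : Matrix (Fin d) (Fin d) ℝ) : ℝ :=
  sSup {t : ℝ | ∃ x y : Fin d → ℝ, (∀ i, 0 < x i) ∧ (∀ i, 0 < y i) ∧
    0 < hilbertDist x y ∧ t = hilbertDist (A.mulVec x) (A.mulVec y) / hilbertDist x y}

/-- The forward product `P_m^n = A_m A_{m+1} ⋯ A_n`. -/
def fwdProd {d : ℕ} (A : ℕ → Matrix (Fin d) (Fin d) ℝ) (m n : ℕ) :
    Matrix (Fin d) (Fin d) ℝ :=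
  ((List.range' m (n + 1 - m)).map A).prod

namespace Stmt5Aux

variable {d : ℕ}

noncomputable def vRatio (x y : Fin d → ℝ) : ℝ :=
  ⨆ i : Fin d, ⨆ j : Fin d, (x i * y j) / (x j * y i)

lemma hilbertDist_def (x y : Fin d → ℝ) : hilbertDist x y = Real.log (vRatio x y) := rfl

lemma ratio_le_vRatio (x y : Fin d → ℝ) (i j : Fin d) :
    (x i * y j) / (x j * y i) ≤ vRatio x y := by
  haveI : Nonempty (Fin d) := ⟨i⟩
  refine le_trans (le_ciSup (f := fun j => (x i * y j) / (x j * y i))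
    (Finite.bddAbove_range _) j) ?_
  exact le_ciSup (f := fun i => ⨆ j : Fin d, (x i * y j) / (x j * y i))
    (Finite.bddAbove_range _) i

lemma one_le_vRatio (hd : 0 < d) (x y : Fin d → ℝ) (hx : ∀ i, 0 < x i) (hy : ∀ i, 0 < y i) :
    1 ≤ vRatio x y := by
  have i : Fin d := ⟨0, hd⟩
  have h := ratio_le_vRatio x y i i
  rwa [div_self (ne_of_gt (mul_pos (hx i) (hy i)))] at h

lemma vRatio_pos (hd : 0 < d) (x y : Fin d → ℝ) (hx : ∀ i, 0 < x i) (hy : ∀ i, 0 < y i) :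
    0 < vRatio x y := lt_of_lt_of_le one_pos (one_le_vRatio hd x y hx hy)

lemma hilbertDist_nonneg (hd : 0 < d) (x y : Fin d → ℝ) (hx : ∀ i, 0 < x i)
    (hy : ∀ i, 0 < y i) : 0 ≤ hilbertDist x y := by
  rw [hilbertDist_def]
  exact Real.log_nonneg (one_le_vRatio hd x y hx hy)

lemma exp_hilbertDist (hd : 0 < d) (x y : Fin d → ℝ) (hx : ∀ i, 0 < x i) (hy : ∀ i, 0 < y i) :
    Real.exp (hilbertDist x y) = vRatio x y := by
  rw [hilbertDist_def]
  exact Real.exp_log (vRatio_pos hd x y hx hy)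

lemma mul_le_vRatio_mul (x y : Fin d → ℝ) (hx : ∀ i, 0 < x i) (hy : ∀ i, 0 < y i) (i j : Fin d) :
    x i * y j ≤ vRatio x y * (x j * y i) := by
  have h := ratio_le_vRatio x y i j
  rw [div_le_iff₀ (mul_pos (hx j) (hy i))] at h
  linarith

lemma vRatio_le (hd : 0 < d) (x y : Fin d → ℝ) {c : ℝ}
    (h : ∀ i j, (x i * y j) / (x j * y i) ≤ c) : vRatio x y ≤ c := by
  haveI : Nonempty (Fin d) := ⟨⟨0, hd⟩⟩
  exact ciSup_le fun i => ciSup_le fun j => h i j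

lemma hilbertDist_le_log (hd : 0 < d) (x y : Fin d → ℝ) (hx : ∀ i, 0 < x i)
    (hy : ∀ i, 0 < y i) {c : ℝ}
    (h : ∀ i j, (x i * y j) / (x j * y i) ≤ c) : hilbertDist x y ≤ Real.log c := by
  rw [hilbertDist_def]
  exact Real.log_le_log (vRatio_pos hd x y hx hy) (vRatio_le hd x y h)


noncomputable def eRatio (P : Matrix (Fin d) (Fin d) ℝ) : ℝ :=
  ⨆ q : (Fin d × Fin d) × Fin d × Fin d,
    (P q.1.1 q.2.1 * P q.1.2 q.2.2) / (P q.1.2 q.2.1 * P q.1.1 q.2.2)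

noncomputable def birkDiam (P : Matrix (Fin d) (Fin d) ℝ) : ℝ := Real.log (eRatio P)

lemma quad_le_eRatio (P : Matrix (Fin d) (Fin d) ℝ) (i j k l : Fin d) :
    (P i k * P j l) / (P j k * P i l) ≤ eRatio P := by
  haveI : Nonempty (Fin d) := ⟨i⟩
  exact le_ciSup (f := fun q : (Fin d × Fin d) × Fin d × Fin d =>
    (P q.1.1 q.2.1 * P q.1.2 q.2.2) / (P q.1.2 q.2.1 * P q.1.1 q.2.2))
    (Finite.bddAbove_range _) ((i, j), (k, l))

lemma one_le_eRatio (hd : 0 < d) (P : Matrix (Fin d) (Fin d) ℝ)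
    (hP : ∀ i j, 0 < P i j) : 1 ≤ eRatio P := by
  have i : Fin d := ⟨0, hd⟩
  have h := quad_le_eRatio P i i i i
  rwa [div_self (ne_of_gt (mul_pos (hP i i) (hP i i)))] at h

lemma eRatio_pos (hd : 0 < d) (P : Matrix (Fin d) (Fin d) ℝ)
    (hP : ∀ i j, 0 < P i j) : 0 < eRatio P :=
  lt_of_lt_of_le one_pos (one_le_eRatio hd P hP)

lemma birkDiam_nonneg (hd : 0 < d) (P : Matrix (Fin d) (Fin d) ℝ)
    (hP : ∀ i j, 0 < P i j) : 0 ≤ birkDiam P :=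
  Real.log_nonneg (one_le_eRatio hd P hP)

lemma exp_birkDiam (hd : 0 < d) (P : Matrix (Fin d) (Fin d) ℝ)
    (hP : ∀ i j, 0 < P i j) : Real.exp (birkDiam P) = eRatio P :=
  Real.exp_log (eRatio_pos hd P hP)

lemma quad_mul_le (P : Matrix (Fin d) (Fin d) ℝ) (hP : ∀ i j, 0 < P i j) (i j k l : Fin d) :
    P i k * P j l ≤ eRatio P * (P j k * P i l) := by
  have h := quad_le_eRatio P i j k l
  rw [div_le_iff₀ (mul_pos (hP j k) (hP i l))] at h
  linarith

lemma eRatio_le (hd : 0 < d) (P : Matrix (Fin d) (Fin d) ℝ) {c : ℝ}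
    (h : ∀ i j k l, (P i k * P j l) / (P j k * P i l) ≤ c) : eRatio P ≤ c := by
  haveI : Nonempty (Fin d) := ⟨⟨0, hd⟩⟩
  exact ciSup_le fun q => h q.1.1 q.1.2 q.2.1 q.2.2

lemma mulVec_entry (P : Matrix (Fin d) (Fin d) ℝ) (x : Fin d → ℝ) (i : Fin d) :
    P.mulVec x i = ∑ k : Fin d, P i k * x k := by
  simp [Matrix.mulVec, dotProduct]

lemma mulVec_pos (P : Matrix (Fin d) (Fin d) ℝ) (hP : ∀ i j, 0 < P i j)
    {x : Fin d → ℝ} (hx : ∀ i, 0 ≤ x i) (hx0 : x ≠ 0) (i : Fin d) :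
    0 < P.mulVec x i := by
  obtain ⟨k, hk⟩ := Function.ne_iff.mp hx0
  have hxk : 0 < x k := lt_of_le_of_ne (hx k) (Ne.symm hk)
  rw [mulVec_entry]
  exact Finset.sum_pos' (fun j _ => mul_nonneg (le_of_lt (hP i j)) (hx j))
    ⟨k, Finset.mem_univ k, mul_pos (hP i k) hxk⟩

lemma mulVec_mul_expand (P : Matrix (Fin d) (Fin d) ℝ) (x y : Fin d → ℝ) (a b : Fin d) :
    P.mulVec x a * P.mulVec y b = ∑ k : Fin d, ∑ l : Fin d, P a k * P b l * (x k * y l) := by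
  rw [mulVec_entry, mulVec_entry, Finset.sum_mul_sum]
  apply Finset.sum_congr rfl
  intro k _
  apply Finset.sum_congr rfl
  intro l _
  ring

/-- Diameter bound: images of nonnegative nonzero vectors are within `birkDiam P`. -/
lemma diam_bound (hd : 0 < d) (P : Matrix (Fin d) (Fin d) ℝ) (hP : ∀ i j, 0 < P i j)
    {x y : Fin d → ℝ} (hx : ∀ i, 0 ≤ x i) (hx0 : x ≠ 0) (hy : ∀ i, 0 ≤ y i) (hy0 : y ≠ 0) :
    hilbertDist (P.mulVec x) (P.mulVec y) ≤ birkDiam P := by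
  refine hilbertDist_le_log hd _ _ (mulVec_pos P hP hx hx0) (mulVec_pos P hP hy hy0) ?_
  intro i j
  rw [div_le_iff₀ (mul_pos (mulVec_pos P hP hx hx0 j) (mulVec_pos P hP hy hy0 i))]
  rw [mulVec_mul_expand, mulVec_mul_expand, Finset.mul_sum]
  refine Finset.sum_le_sum ?_
  intro k _
  rw [Finset.mul_sum]
  refine Finset.sum_le_sum ?_
  intro l _
  rw [← mul_assoc (eRatio P)]
  exact mul_le_mul_of_nonneg_right (quad_mul_le P hP i j k l)
    (mul_nonneg (hx k) (hy l))


lemma pair_ineq {a a' u u' E S : ℝ}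
    (h1 : a ≤ E * a') (h2 : a' ≤ E * a) (h3 : u ≤ S * u') (h4 : u' ≤ S * u) :
    (a * u + a' * u') * (S + E) ≤ (E * S + 1) * (a' * u + a * u') := by
  nlinarith [mul_nonneg (sub_nonneg.2 h1) (sub_nonneg.2 h4),
    mul_nonneg (sub_nonneg.2 h2) (sub_nonneg.2 h3)]

lemma num_den (P : Matrix (Fin d) (Fin d) ℝ) (hP : ∀ i j, 0 < P i j)
    {x y : Fin d → ℝ} (hx : ∀ i, 0 < x i) (hy : ∀ i, 0 < y i) (i j : Fin d) :
    P.mulVec x i * P.mulVec y j * (vRatio x y + eRatio P)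
      ≤ (eRatio P * vRatio x y + 1) * (P.mulVec x j * P.mulVec y i) := by
  set E := eRatio P with hE
  set S := vRatio x y with hS
  have key : ∀ k l : Fin d,
      (P i k * P j l * (x k * y l) + P i l * P j k * (x l * y k)) * (S + E)
        ≤ (E * S + 1) * (P j k * P i l * (x k * y l) + P j l * P i k * (x l * y k)) := by
    intro k l
    have h1 := quad_mul_le P hP i j k l
    have h2 := quad_mul_le P hP j i k l
    have h3 := mul_le_vRatio_mul x y hx hy k l
    have h4 := mul_le_vRatio_mul x y hx hy l k
    have := pair_ineq (a := P i k * P j l) (a' := P j k * P i l)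
      (u := x k * y l) (u' := x l * y k) (E := E) (S := S) h1 h2 h3 h4
    nlinarith [this]
  have hsum : (∑ k : Fin d, ∑ l : Fin d,
      (P i k * P j l * (x k * y l) + P i l * P j k * (x l * y k)) * (S + E))
      ≤ ∑ k : Fin d, ∑ l : Fin d,
      (E * S + 1) * (P j k * P i l * (x k * y l) + P j l * P i k * (x l * y k)) :=
    Finset.sum_le_sum fun k _ => Finset.sum_le_sum fun l _ => key k l
  have swap1 : (∑ k : Fin d, ∑ l : Fin d, P i l * P j k * (x l * y k))
      = ∑ k : Fin d, ∑ l : Fin d, P i k * P j l * (x k * y l) := Finset.sum_comm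
  have swap2 : (∑ k : Fin d, ∑ l : Fin d, P j l * P i k * (x l * y k))
      = ∑ k : Fin d, ∑ l : Fin d, P j k * P i l * (x k * y l) := Finset.sum_comm
  have eL : (∑ k : Fin d, ∑ l : Fin d,
      (P i k * P j l * (x k * y l) + P i l * P j k * (x l * y k)) * (S + E))
      = 2 * (P.mulVec x i * P.mulVec y j) * (S + E) := by
    simp only [add_mul, Finset.sum_add_distrib, ← Finset.sum_mul]
    rw [swap1, ← mulVec_mul_expand]
    ring
  have eR : (∑ k : Fin d, ∑ l : Fin d,
      (E * S + 1) * (P j k * P i l * (x k * y l) + P j l * P i k * (x l * y k)))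
      = (E * S + 1) * (2 * (P.mulVec x j * P.mulVec y i)) := by
    simp only [mul_add, Finset.sum_add_distrib, ← Finset.mul_sum]
    rw [swap2, ← mulVec_mul_expand]
    ring
  rw [eL, eR] at hsum
  linarith

/-- The key contraction estimate: `D(Px, Py) ≤ (E(P) - 1) · D(x,y)`. -/
lemma contract (hd : 0 < d) (P : Matrix (Fin d) (Fin d) ℝ) (hP : ∀ i j, 0 < P i j)
    {x y : Fin d → ℝ} (hx : ∀ i, 0 < x i) (hy : ∀ i, 0 < y i) :
    hilbertDist (P.mulVec x) (P.mulVec y) ≤ (eRatio P - 1) * hilbertDist x y := by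
  set E := eRatio P with hE
  set S := vRatio x y with hS
  have hE1 : 1 ≤ E := one_le_eRatio hd P hP
  have hS1 : 1 ≤ S := one_le_vRatio hd x y hx hy
  have hSpos : 0 < S := lt_of_lt_of_le one_pos hS1
  have hSE : 0 < S + E := by linarith
  have hKpos : 0 < (E * S + 1) / (S + E) := by positivity
  have hxpos : ∀ i, 0 ≤ x i := fun i => le_of_lt (hx i)
  have hx0 : x ≠ 0 := by
    intro h
    have := hx ⟨0, hd⟩
    rw [h] at this
    simp at this
  have hy0 : y ≠ 0 := by
    intro h
    have := hy ⟨0, hd⟩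
    rw [h] at this
    simp at this
  have h1 : hilbertDist (P.mulVec x) (P.mulVec y) ≤ Real.log ((E * S + 1) / (S + E)) := by
    refine hilbertDist_le_log hd _ _ (mulVec_pos P hP hxpos hx0)
      (mulVec_pos P hP (fun i => le_of_lt (hy i)) hy0) ?_
    intro i j
    rw [div_le_div_iff₀ (mul_pos (mulVec_pos P hP hxpos hx0 j)
      (mulVec_pos P hP (fun i => le_of_lt (hy i)) hy0 i)) hSE]
    exact num_den P hP hx hy i j
  have ha : Real.log ((E * S + 1) / (S + E)) ≤ (E * S + 1) / (S + E) - 1 :=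
    Real.log_le_sub_one_of_pos hKpos
  have hb : (E * S + 1) / (S + E) - 1 = (E - 1) * (S - 1) / (S + E) := by
    field_simp
    ring
  have hc : (E - 1) * (S - 1) / (S + E) ≤ (E - 1) * (S - 1) / (S + 1) := by
    apply div_le_div_of_nonneg_left (by nlinarith) (by linarith) (by linarith)
  have hd2 : (S - 1) / (S + 1) ≤ Real.log S := by
    set t := Real.log S with ht0
    have ht : 0 ≤ t := Real.log_nonneg hS1
    have hexp : Real.exp t = S := Real.exp_log hSpos
    rw [div_le_iff₀ (by linarith)]
    have h5 : 1 - t ≤ Real.exp (-t) := by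
      have := Real.add_one_le_exp (-t)
      linarith
    have h6 : Real.exp (-t) * Real.exp t = 1 := by
      rw [← Real.exp_add]
      simp
    nlinarith [Real.exp_pos t,
      mul_le_mul_of_nonneg_right h5 (le_of_lt (Real.exp_pos t))]
  have he : (E - 1) * (S - 1) / (S + 1) ≤ (E - 1) * Real.log S := by
    rw [mul_div_assoc]
    exact mul_le_mul_of_nonneg_left hd2 (by linarith)
  have hfin : hilbertDist x y = Real.log S := hilbertDist_def x y
  rw [hfin]
  linarith


def birkSet (P : Matrix (Fin d) (Fin d) ℝ) : Set ℝ :=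
  {t : ℝ | ∃ x y : Fin d → ℝ, (∀ i, 0 < x i) ∧ (∀ i, 0 < y i) ∧
    0 < hilbertDist x y ∧ t = hilbertDist (P.mulVec x) (P.mulVec y) / hilbertDist x y}

lemma birkhoffCoeff_eq (P : Matrix (Fin d) (Fin d) ℝ) :
    birkhoffCoeff P = sSup (birkSet P) := rfl

lemma pos_ne_zero (hd : 0 < d) {x : Fin d → ℝ} (hx : ∀ i, 0 < x i) : x ≠ 0 := by
  intro h
  have := hx ⟨0, hd⟩
  rw [h] at this
  simp at this

lemma birkSet_upper (hd : 0 < d) (P : Matrix (Fin d) (Fin d) ℝ) (hP : ∀ i j, 0 < P i j) :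
    ∀ t ∈ birkSet P, t ≤ eRatio P - 1 := by
  rintro t ⟨x, y, hx, hy, hD, rfl⟩
  rw [div_le_iff₀ hD]
  exact contract hd P hP hx hy

lemma tau_nonneg (hd : 0 < d) (P : Matrix (Fin d) (Fin d) ℝ) (hP : ∀ i j, 0 < P i j) :
    0 ≤ birkhoffCoeff P := by
  rw [birkhoffCoeff_eq]
  refine Real.sSup_nonneg ?_
  rintro t ⟨x, y, hx, hy, hD, rfl⟩
  refine div_nonneg ?_ (le_of_lt hD)
  exact hilbertDist_nonneg hd _ _
    (mulVec_pos P hP (fun i => le_of_lt (hx i)) (pos_ne_zero hd hx))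
    (mulVec_pos P hP (fun i => le_of_lt (hy i)) (pos_ne_zero hd hy))

lemma tau_le (hd : 0 < d) (P : Matrix (Fin d) (Fin d) ℝ) (hP : ∀ i j, 0 < P i j) :
    birkhoffCoeff P ≤ eRatio P - 1 := by
  rw [birkhoffCoeff_eq]
  refine Real.sSup_le (birkSet_upper hd P hP) ?_
  have := one_le_eRatio hd P hP
  linarith

lemma tau_contract (hd : 0 < d) (P : Matrix (Fin d) (Fin d) ℝ) (hP : ∀ i j, 0 < P i j)
    {x y : Fin d → ℝ} (hx : ∀ i, 0 < x i) (hy : ∀ i, 0 < y i) :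
    hilbertDist (P.mulVec x) (P.mulVec y) ≤ birkhoffCoeff P * hilbertDist x y := by
  rcases eq_or_lt_of_le (hilbertDist_nonneg hd x y hx hy) with h0 | hpos
  · rw [← h0, mul_zero]
    have hcon := contract hd P hP hx hy
    rw [← h0, mul_zero] at hcon
    exact hcon
  · have hmem : hilbertDist (P.mulVec x) (P.mulVec y) / hilbertDist x y ∈ birkSet P :=
      ⟨x, y, hx, hy, hpos, rfl⟩
    have hbdd : BddAbove (birkSet P) := ⟨eRatio P - 1, birkSet_upper hd P hP⟩
    have hle := le_csSup hbdd hmem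
    rw [← birkhoffCoeff_eq] at hle
    calc hilbertDist (P.mulVec x) (P.mulVec y)
        = hilbertDist (P.mulVec x) (P.mulVec y) / hilbertDist x y * hilbertDist x y :=
          (div_mul_cancel₀ _ (ne_of_gt hpos)).symm
      _ ≤ birkhoffCoeff P * hilbertDist x y :=
          mul_le_mul_of_nonneg_right hle (le_of_lt hpos)


lemma ite_nonneg' (k₀ b : Fin d) : (0:ℝ) ≤ if b = k₀ then (1:ℝ) else 0 := by
  split <;> norm_num

lemma ite_le_one' (k₀ b : Fin d) : (if b = k₀ then (1:ℝ) else 0) ≤ 1 := by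
  split <;> norm_num

lemma testVec_pos {δ : ℝ} (hδ : 0 < δ) (P : Matrix (Fin d) (Fin d) ℝ)
    (hP : ∀ i j, 0 < P i j) (r k₀ : Fin d) (b : Fin d) :
    0 < (δ + if b = k₀ then (1:ℝ) else 0) / P r b := by
  apply div_pos _ (hP r b)
  have := ite_nonneg' k₀ b
  linarith

lemma image_lower {δ : ℝ} (hδ : 0 < δ) (P : Matrix (Fin d) (Fin d) ℝ)
    (hP : ∀ i j, 0 < P i j) (r k₀ a : Fin d) :
    P a k₀ / P r k₀ ≤
      P.mulVec (fun b => (δ + if b = k₀ then (1:ℝ) else 0) / P r b) a := by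
  rw [mulVec_entry]
  have hterm : P a k₀ / P r k₀ ≤
      P a k₀ * ((δ + if k₀ = k₀ then (1:ℝ) else 0) / P r k₀) := by
    rw [if_pos rfl, mul_div_assoc']
    apply div_le_div_of_nonneg_right ?_ (le_of_lt (hP r k₀))
    nlinarith [hP a k₀]
  refine le_trans hterm ?_
  refine Finset.single_le_sum
    (f := fun b => P a b * ((δ + if b = k₀ then (1:ℝ) else 0) / P r b)) ?_
    (Finset.mem_univ k₀)
  intro b _
  exact mul_nonneg (le_of_lt (hP a b)) (le_of_lt (testVec_pos hδ P hP r k₀ b))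

lemma image_upper (hd : 0 < d) {δ : ℝ} (hδ : 0 < δ) (P : Matrix (Fin d) (Fin d) ℝ)
    (hP : ∀ i j, 0 < P i j) (r k₀ a : Fin d) :
    P.mulVec (fun b => (δ + if b = k₀ then (1:ℝ) else 0) / P r b) a ≤
      (1 + δ * d * eRatio P) * (P a k₀ / P r k₀) := by
  set E := eRatio P with hE
  set u := P a k₀ / P r k₀ with hu
  have hupos : 0 < u := div_pos (hP a k₀) (hP r k₀)
  rw [mulVec_entry]
  have hterm : ∀ b : Fin d, P a b * ((δ + if b = k₀ then (1:ℝ) else 0) / P r b)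
      ≤ δ * (E * u) + (if b = k₀ then (1:ℝ) else 0) * u := by
    intro b
    have hsplit : P a b * ((δ + if b = k₀ then (1:ℝ) else 0) / P r b)
        = δ * (P a b / P r b) + (if b = k₀ then (1:ℝ) else 0) * (P a b / P r b) := by
      split_ifs <;> field_simp <;> ring
    rw [hsplit]
    have hquot : P a b / P r b ≤ E * u := by
      rw [div_le_iff₀ (hP r b), hu]
      have hq := quad_mul_le P hP a r b k₀
      have heq : E * (P a k₀ / P r k₀) * P r b = E * (P r b * P a k₀) / P r k₀ := by
        field_simp
      rw [heq, le_div_iff₀ (hP r k₀)]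
      exact hq
    have h1 : δ * (P a b / P r b) ≤ δ * (E * u) :=
      mul_le_mul_of_nonneg_left hquot (le_of_lt hδ)
    have h2 : (if b = k₀ then (1:ℝ) else 0) * (P a b / P r b)
        ≤ (if b = k₀ then (1:ℝ) else 0) * u := by
      split
      · next h => rw [h]
      · simp
    linarith
  calc (∑ b : Fin d, P a b * ((δ + if b = k₀ then (1:ℝ) else 0) / P r b))
      ≤ ∑ b : Fin d, (δ * (E * u) + (if b = k₀ then (1:ℝ) else 0) * u) :=
        Finset.sum_le_sum fun b _ => hterm b
    _ = d * (δ * (E * u)) + u := by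
        rw [Finset.sum_add_distrib, Finset.sum_const, ← Finset.sum_mul]
        simp [Finset.card_univ]
    _ = (1 + δ * d * E) * u := by ring


lemma ind_ratio_bound {δ a b c e : ℝ} (hδ : 0 < δ) (ha : 0 ≤ a) (ha1 : a ≤ 1)
    (hb : 0 ≤ b) (hb1 : b ≤ 1) (hc : 0 ≤ c) (he : 0 ≤ e) :
    (δ + a) * (δ + b) / ((δ + c) * (δ + e)) ≤ ((1 + δ) / δ) ^ 2 := by
  rw [div_pow, div_le_div_iff₀ (by nlinarith) (by nlinarith)]
  have h1 : (δ + a) * (δ + b) ≤ (1 + δ) * (1 + δ) :=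
    mul_le_mul (by linarith) (by linarith) (by linarith) (by linarith)
  have h2 : δ * δ ≤ (δ + c) * (δ + e) :=
    mul_le_mul (by linarith) (by linarith) (by linarith) (by linarith)
  nlinarith [mul_le_mul_of_nonneg_right h1 (by positivity : (0:ℝ) ≤ δ * δ),
    mul_le_mul_of_nonneg_left h2 (by positivity : (0:ℝ) ≤ (1 + δ) * (1 + δ))]

/-- The key lower bound: the diameter is controlled by the contraction coefficient. -/
lemma star (hd : 0 < d) (P : Matrix (Fin d) (Fin d) ℝ) (hP : ∀ i j, 0 < P i j)
    {δ : ℝ} (hδ : 0 < δ) :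
    birkDiam P ≤ birkhoffCoeff P * (2 * Real.log ((1 + δ) / δ))
      + 2 * Real.log (1 + δ * d * eRatio P) := by
  have hE1 : 1 ≤ eRatio P := one_le_eRatio hd P hP
  haveI : Nonempty (Fin d) := ⟨⟨0, hd⟩⟩
  obtain ⟨q0, hq0⟩ := Finite.exists_max (fun q : (Fin d × Fin d) × Fin d × Fin d =>
    (P q.1.1 q.2.1 * P q.1.2 q.2.2) / (P q.1.2 q.2.1 * P q.1.1 q.2.2))
  obtain ⟨⟨i₀, j₀⟩, k₀, l₀⟩ := q0
  have hEeq : eRatio P = P i₀ k₀ * P j₀ l₀ / (P j₀ k₀ * P i₀ l₀) :=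
    le_antisymm (ciSup_le hq0) (quad_le_eRatio P i₀ j₀ k₀ l₀)
  set x : Fin d → ℝ := fun b => (δ + if b = k₀ then (1:ℝ) else 0) / P i₀ b with hxdef
  set y : Fin d → ℝ := fun b => (δ + if b = l₀ then (1:ℝ) else 0) / P i₀ b with hydef
  have hx : ∀ b, 0 < x b := testVec_pos hδ P hP i₀ k₀
  have hy : ∀ b, 0 < y b := testVec_pos hδ P hP i₀ l₀
  have hDxy : hilbertDist x y ≤ 2 * Real.log ((1 + δ) / δ) := by
    have h2 : hilbertDist x y ≤ Real.log (((1 + δ) / δ) ^ 2) := by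
      refine hilbertDist_le_log hd x y hx hy ?_
      intro i j
      have heq : x i * y j / (x j * y i)
          = ((δ + if i = k₀ then (1:ℝ) else 0) * (δ + if j = l₀ then (1:ℝ) else 0))
            / ((δ + if j = k₀ then (1:ℝ) else 0) * (δ + if i = l₀ then (1:ℝ) else 0)) := by
        rw [hxdef, hydef]
        have n1 : P i₀ i ≠ 0 := ne_of_gt (hP i₀ i)
        have n2 : P i₀ j ≠ 0 := ne_of_gt (hP i₀ j)
        have n3 : (δ + if j = k₀ then (1:ℝ) else 0) ≠ 0 :=
          ne_of_gt (by have := ite_nonneg' k₀ j; linarith)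
        have n4 : (δ + if i = l₀ then (1:ℝ) else 0) ≠ 0 :=
          ne_of_gt (by have := ite_nonneg' l₀ i; linarith)
        field_simp
      rw [heq]
      exact ind_ratio_bound hδ (ite_nonneg' k₀ i) (ite_le_one' k₀ i)
        (ite_nonneg' l₀ j) (ite_le_one' l₀ j) (ite_nonneg' k₀ j) (ite_nonneg' l₀ i)
    rw [Real.log_pow] at h2
    push_cast at h2
    linarith
  set c := 1 + δ * d * eRatio P with hcdef
  have hc1 : 1 ≤ c := by
    have h0 : 0 ≤ δ * d * eRatio P :=
      mul_nonneg (mul_nonneg hδ.le (Nat.cast_nonneg d)) (by linarith)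
    linarith
  have hcpos : 0 < c := lt_of_lt_of_le one_pos hc1
  have hlow_x := image_lower hδ P hP i₀ k₀
  have hlow_y := image_lower hδ P hP i₀ l₀
  have hup_x := image_upper hd hδ P hP i₀ k₀
  have hup_y := image_upper hd hδ P hP i₀ l₀
  have hPx := mulVec_pos P hP (fun b => (hx b).le) (pos_ne_zero hd hx)
  have hPy := mulVec_pos P hP (fun b => (hy b).le) (pos_ne_zero hd hy)
  have hratio : eRatio P / c ^ 2 ≤ vRatio (P.mulVec x) (P.mulVec y) := by
    refine le_trans ?_ (ratio_le_vRatio (P.mulVec x) (P.mulVec y) i₀ j₀)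
    have hid : eRatio P / c ^ 2
        = (P i₀ k₀ / P i₀ k₀ * (P j₀ l₀ / P i₀ l₀))
          / (c * (P j₀ k₀ / P i₀ k₀) * (c * (P i₀ l₀ / P i₀ l₀))) := by
      rw [hEeq]
      field_simp [(hP i₀ k₀).ne', (hP i₀ l₀).ne', (hP j₀ k₀).ne', (hP j₀ l₀).ne',
        hcpos.ne']
    rw [hid]
    refine div_le_div₀ (mul_nonneg (hPx i₀).le (hPy j₀).le)
      (mul_le_mul (hlow_x i₀) (hlow_y j₀)
        (le_of_lt (div_pos (hP j₀ l₀) (hP i₀ l₀))) (hPx i₀).le)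
      (mul_pos (hPx j₀) (hPy i₀)) ?_
    exact mul_le_mul (hup_x j₀) (hup_y i₀) (hPy i₀).le
      (mul_nonneg hcpos.le (le_of_lt (div_pos (hP j₀ k₀) (hP i₀ k₀))))
  have hEpos : (0:ℝ) < eRatio P := by linarith
  have h1 : Real.log (eRatio P / c ^ 2) ≤ hilbertDist (P.mulVec x) (P.mulVec y) := by
    rw [hilbertDist_def]
    exact Real.log_le_log (by positivity) hratio
  rw [Real.log_div hEpos.ne' (by positivity), Real.log_pow] at h1
  push_cast at h1
  have htau := tau_contract hd P hP hx hy
  have htau2 : birkhoffCoeff P * hilbertDist x y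
      ≤ birkhoffCoeff P * (2 * Real.log ((1 + δ) / δ)) :=
    mul_le_mul_of_nonneg_left hDxy (tau_nonneg hd P hP)
  have hbd : birkDiam P = Real.log (eRatio P) := rfl
  rw [hbd]
  linarith


lemma mul_entry_pos (hd : 0 < d) {B C : Matrix (Fin d) (Fin d) ℝ}
    (hB : ∀ i j, 0 < B i j) (hC : ∀ i j, 0 < C i j) (i j : Fin d) : 0 < (B * C) i j := by
  rw [Matrix.mul_apply]
  exact Finset.sum_pos (fun k _ => mul_pos (hB i k) (hC k j))
    ⟨⟨0, hd⟩, Finset.mem_univ _⟩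

lemma fwdProd_self (A : ℕ → Matrix (Fin d) (Fin d) ℝ) (m : ℕ) :
    fwdProd A m m = A m := by
  have h1 : m + 1 - m = 1 := by omega
  rw [fwdProd, h1]
  simp

lemma fwdProd_succ (A : ℕ → Matrix (Fin d) (Fin d) ℝ) (m t : ℕ) :
    fwdProd A m (m + t + 1) = fwdProd A m (m + t) * A (m + t + 1) := by
  have h1 : m + t + 1 + 1 - m = (t + 1) + 1 := by omega
  have h2 : m + t + 1 - m = t + 1 := by omega
  rw [fwdProd, fwdProd, h1, h2, List.range'_concat]
  have h3 : m + 1 * (t + 1) = m + t + 1 := by omega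
  rw [h3]
  simp

lemma fwdProd_pos (hd : 0 < d) (A : ℕ → Matrix (Fin d) (Fin d) ℝ)
    (hA : ∀ k i j, 0 < A k i j) (m n : ℕ) (h : m ≤ n) :
    ∀ i j, 0 < fwdProd A m n i j := by
  obtain ⟨t, rfl⟩ := Nat.exists_eq_add_of_le h
  clear h
  induction t with
  | zero => simpa [fwdProd_self] using hA m
  | succ t ih =>
      have : m + (t + 1) = m + t + 1 := by omega
      rw [this, fwdProd_succ]
      exact mul_entry_pos hd ih (hA (m + t + 1))

lemma single_nonneg' (k : Fin d) : ∀ a, (0:ℝ) ≤ if a = k then (1:ℝ) else 0 :=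
  fun a => ite_nonneg' k a

lemma single_ne_zero' (k : Fin d) : (fun a => if a = k then (1:ℝ) else 0) ≠ 0 := by
  intro h
  have := congrFun h k
  simp at this

lemma mulVec_single' (P : Matrix (Fin d) (Fin d) ℝ) (k : Fin d) (a : Fin d) :
    P.mulVec (fun b => if b = k then (1:ℝ) else 0) a = P a k := by
  rw [mulVec_entry]
  simp [mul_ite]

/-- Forward direction: `τ(P_m^n) → 0` implies the diameters tend to `0`. -/
lemma forward_diam (hd : 0 < d) (A : ℕ → Matrix (Fin d) (Fin d) ℝ)
    (hA : ∀ k i j, 0 < A k i j) (m : ℕ)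
    (htau : Tendsto (fun n => birkhoffCoeff (fwdProd A m n)) atTop (nhds 0))
    {ε : ℝ} (hε : 0 < ε) :
    ∃ N : ℕ, ∀ n ≥ N, m ≤ n ∧ birkDiam (fwdProd A m n) < ε := by
  set s : ℝ := (Real.exp (ε / 8) - 1) / d with hsdef
  have hexp1 : 1 < Real.exp (ε / 8) := by
    have := Real.add_one_le_exp (ε / 8)
    linarith
  have hdpos : (0:ℝ) < d := by exact_mod_cast hd
  have hs : 0 < s := div_pos (by linarith) hdpos
  set C : ℝ := Real.log (1 + s) - Real.log s with hCdef
  have hC : 0 < C := by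
    have := Real.log_lt_log hs (by linarith : s < 1 + s)
    linarith
  set θ : ℝ := min (1/4) (ε / (8 * (C + 1))) with hθdef
  have hθ : 0 < θ := lt_min (by norm_num) (div_pos hε (by linarith))
  rw [Metric.tendsto_atTop] at htau
  obtain ⟨N₀, hN₀⟩ := htau θ hθ
  refine ⟨max N₀ m, fun n hn => ?_⟩
  have hnm : m ≤ n := le_trans (le_max_right _ _) hn
  have hP := fwdProd_pos hd A hA m n hnm
  set P := fwdProd A m n with hPdef
  set E := eRatio P with hEdef
  have hE1 : 1 ≤ E := one_le_eRatio hd P hP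
  have hEpos : (0:ℝ) < E := by linarith
  set τ := birkhoffCoeff P with hτdef
  have hτ0 : 0 ≤ τ := tau_nonneg hd P hP
  have hτθ : τ < θ := by
    have := hN₀ n (le_trans (le_max_left _ _) hn)
    rw [Real.dist_eq, sub_zero, abs_of_nonneg hτ0] at this
    exact this
  set Δ := birkDiam P with hΔdef
  have hΔ0 : 0 ≤ Δ := birkDiam_nonneg hd P hP
  have hEΔ : Real.exp Δ = E := exp_birkDiam hd P hP
  -- apply star with δ = s / E
  set δ : ℝ := s / E with hδdef
  have hδpos : 0 < δ := div_pos hs hEpos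
  have hstar := star hd P hP hδpos
  -- simplify the correction term
  have hcor : 1 + δ * d * eRatio P = 1 + s * d := by
    rw [hδdef, ← hEdef]
    field_simp
  rw [hcor] at hstar
  have hlog_sd : 2 * Real.log (1 + s * d) = ε / 4 := by
    have hsd : s * (d:ℝ) = Real.exp (ε / 8) - 1 := by
      rw [hsdef]
      field_simp
    have h1d : 1 + s * (d:ℝ) = Real.exp (ε / 8) := by rw [hsd]; ring
    rw [h1d, Real.log_exp]
    ring
  rw [hlog_sd] at hstar
  -- bound log((1+δ)/δ)
  have hlogδ : Real.log ((1 + δ) / δ) ≤ C + Δ := by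
    rw [Real.log_div (by linarith) hδpos.ne']
    have h1 : Real.log (1 + δ) ≤ Real.log (1 + s) := by
      apply Real.log_le_log (by linarith)
      have : δ ≤ s := by
        rw [hδdef]
        exact div_le_self hs.le hE1
      linarith
    have h2 : Real.log δ = Real.log s - Δ := by
      rw [hδdef, Real.log_div hs.ne' hEpos.ne', ← hEΔ, Real.log_exp]
    rw [h2, hCdef]
    linarith
  -- combine
  have hτC : τ * (2 * Real.log ((1 + δ) / δ)) ≤ τ * (2 * (C + Δ)) := by
    apply mul_le_mul_of_nonneg_left _ hτ0
    linarith
  have hmain : Δ ≤ 2 * τ * C + 2 * τ * Δ + ε / 4 := by nlinarith [hstar, hτC]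
  have hq1 : 2 * τ * Δ ≤ Δ / 2 := by
    have hτ4 : τ ≤ 1/4 := le_of_lt (lt_of_lt_of_le hτθ (min_le_left _ _))
    nlinarith
  have hq2 : 2 * τ * C < ε / 4 := by
    have hτε : τ < ε / (8 * (C + 1)) := lt_of_lt_of_le hτθ (min_le_right _ _)
    have h8 : 0 < 8 * (C + 1) := by linarith
    rw [lt_div_iff₀ h8] at hτε
    nlinarith
  exact ⟨hnm, by linarith⟩

/-- Reverse direction core: the RHS implies `τ → 0`. -/
lemma reverse_dir (hd : 0 < d) (A : ℕ → Matrix (Fin d) (Fin d) ℝ)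
    (hA : ∀ k i j, 0 < A k i j) (m : ℕ)
    (h : ∀ ε : ℝ, 0 < ε → ∀ x y : Fin d → ℝ,
      (∀ i, 0 ≤ x i) → x ≠ 0 → (∀ i, 0 ≤ y i) → y ≠ 0 →
      ∃ N : ℕ, ∀ n ≥ N,
        hilbertDist ((fwdProd A m n).mulVec x) ((fwdProd A m n).mulVec y) < ε) :
    Tendsto (fun n => birkhoffCoeff (fwdProd A m n)) atTop (nhds 0) := by
  rw [Metric.tendsto_atTop]
  intro ε hε
  set ε₀ : ℝ := Real.log (1 + ε / 2) with hε₀def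
  have hε₀ : 0 < ε₀ := Real.log_pos (by linarith)
  have hev : ∀ᶠ n in atTop, ∀ p : Fin d × Fin d,
      hilbertDist ((fwdProd A m n).mulVec (fun a => if a = p.1 then (1:ℝ) else 0))
        ((fwdProd A m n).mulVec (fun a => if a = p.2 then (1:ℝ) else 0)) < ε₀ := by
    rw [eventually_all]
    intro p
    rw [eventually_atTop]
    exact h ε₀ hε₀ _ _ (single_nonneg' p.1) (single_ne_zero' p.1)
      (single_nonneg' p.2) (single_ne_zero' p.2)
  have hev2 : ∀ᶠ n in atTop, m ≤ n := eventually_ge_atTop m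
  obtain ⟨N, hN⟩ := eventually_atTop.mp (hev.and hev2)
  refine ⟨N, fun n hn => ?_⟩
  obtain ⟨hcols, hnm⟩ := hN n hn
  have hP := fwdProd_pos hd A hA m n hnm
  set P := fwdProd A m n with hPdef
  have hτ0 : 0 ≤ birkhoffCoeff P := tau_nonneg hd P hP
  have hEle : eRatio P ≤ 1 + ε / 2 := by
    apply eRatio_le hd P
    intro i j k l
    have hck : ∀ a, 0 < P.mulVec (fun b => if b = k then (1:ℝ) else 0) a :=
      mulVec_pos P hP (single_nonneg' k) (single_ne_zero' k)
    have hcl : ∀ a, 0 < P.mulVec (fun b => if b = l then (1:ℝ) else 0) a :=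
      mulVec_pos P hP (single_nonneg' l) (single_ne_zero' l)
    have h1 := ratio_le_vRatio (P.mulVec (fun b => if b = k then (1:ℝ) else 0))
      (P.mulVec (fun b => if b = l then (1:ℝ) else 0)) i j
    rw [mulVec_single', mulVec_single', mulVec_single', mulVec_single'] at h1
    refine le_trans h1 ?_
    have h2 := exp_hilbertDist hd _ _ hck hcl
    rw [← h2]
    have h3 := hcols (k, l)
    calc Real.exp (hilbertDist (P.mulVec fun b => if b = k then (1:ℝ) else 0)
          (P.mulVec fun b => if b = l then (1:ℝ) else 0))
        ≤ Real.exp ε₀ := Real.exp_le_exp.mpr (le_of_lt h3)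
      _ = 1 + ε / 2 := by rw [hε₀def, Real.exp_log (by linarith)]
  have hτle : birkhoffCoeff P ≤ ε / 2 := by
    have := tau_le hd P hP
    linarith
  rw [Real.dist_eq, sub_zero, abs_of_nonneg hτ0]
  linarith

end Stmt5Aux

/-- For strictly positive matrices, `τ(P_m^n) → 0` iff the images of
any two nonnegative nonzero vectors become arbitrarily close in projective metric. -/
theorem stmt5 {d : ℕ} (A : ℕ → Matrix (Fin d) (Fin d) ℝ)
    (hA : ∀ k i j, 0 < A k i j) (m : ℕ) :
    Tendsto (fun n => birkhoffCoeff (fwdProd A m n)) atTop (nhds 0) ↔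
    ∀ ε : ℝ, 0 < ε → ∀ x y : Fin d → ℝ,
      (∀ i, 0 ≤ x i) → x ≠ 0 → (∀ i, 0 ≤ y i) → y ≠ 0 →
      ∃ N : ℕ, ∀ n ≥ N,
        hilbertDist ((fwdProd A m n).mulVec x) ((fwdProd A m n).mulVec y) < ε := by
  rcases Nat.eq_zero_or_pos d with hd0 | hd
  · subst hd0
    constructor
    · intro _ ε hε x y hx hx0 hy hy0
      exact absurd (funext fun i => i.elim0) hx0
    · intro _
      have hzero : ∀ n : ℕ, birkhoffCoeff (fwdProd A m n) = 0 := by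
        intro n
        rw [Stmt5Aux.birkhoffCoeff_eq]
        have hempty : Stmt5Aux.birkSet (fwdProd A m n) = ∅ := by
          ext t
          simp only [Stmt5Aux.birkSet, Set.mem_setOf_eq, Set.mem_empty_iff_false,
            iff_false, not_exists]
          intro x y hxy
          obtain ⟨hx, hy, hD, _⟩ := hxy
          have hD0 : hilbertDist x y = 0 := by
            simp [hilbertDist, Real.iSup_of_isEmpty]
          rw [hD0] at hD
          exact lt_irrefl 0 hD
        rw [hempty, Real.sSup_empty]
      have heq : (fun n => birkhoffCoeff (fwdProd A m n)) = fun _ => (0:ℝ) :=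
        funext hzero
      rw [heq]
      exact tendsto_const_nhds
  · constructor
    · intro htau ε hε x y hx hx0 hy hy0
      obtain ⟨N, hN⟩ := Stmt5Aux.forward_diam hd A hA m htau hε
      refine ⟨N, fun n hn => ?_⟩
      obtain ⟨hnm, hΔ⟩ := hN n hn
      have hP := Stmt5Aux.fwdProd_pos hd A hA m n hnm
      exact lt_of_le_of_lt (Stmt5Aux.diam_bound hd _ hP hx hx0 hy hy0) hΔ
    · exact Stmt5Aux.reverse_dir hd A hA m
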